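/- Let T be a standard k-shape tableau and suppose the letter n occupies ℓ+1 cells forming a cover c_n. Let charge'(n) be the charge of letter n computed as if n↑ were located at the position of n↓. Then charge'(n) − charge(n) = ℓ = |c_n| − 1. -/

import Mathlib

open Classical

structure KPartition where
  parts : ℕ → ℕ
  antitone' : ∀ i j : ℕ, i ≤ j → parts j ≤ parts i
  finite' : ∃ N : ℕ, ∀ i : ℕ, N ≤ i → parts i = 0

namespace KPartition

def empty : KPartition :=
  ⟨fun _ => 0, fun _ _ _ => le_rfl, ⟨0, fun _ _ => rfl⟩⟩

def Mem (lam : KPartition) (b : ℕ × ℕ) : Prop := b.2 < lam.parts b.1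

def Le (lam mu : KPartition) : Prop := ∀ i : ℕ, lam.parts i ≤ mu.parts i

noncomputable def conj (lam : KPartition) (j : ℕ) : ℕ :=
  @Nat.find (fun i => lam.parts i ≤ j) (Classical.decPred _)
    (by
      obtain ⟨N, hN⟩ := lam.finite'
      exact ⟨N, show lam.parts N ≤ j by rw [hN N le_rfl]; exact Nat.zero_le j⟩)

noncomputable def hook (lam : KPartition) (i j : ℕ) : ℕ :=
  (lam.parts i - j) + (lam.conj j - i) - 1

noncomputable def rsk (k : ℕ) (lam : KPartition) (i : ℕ) : ℕ :=
  Nat.card {j : ℕ | lam.Mem (i, j) ∧ lam.hook i j ≤ k}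

noncomputable def csk (k : ℕ) (lam : KPartition) (j : ℕ) : ℕ :=
  Nat.card {i : ℕ | lam.Mem (i, j) ∧ lam.hook i j ≤ k}

def IsKShape (k : ℕ) (lam : KPartition) : Prop :=
  (∀ i i' : ℕ, i ≤ i' → rsk k lam i' ≤ rsk k lam i) ∧
  (∀ j j' : ℕ, j ≤ j' → csk k lam j' ≤ csk k lam j)

def IsCore (p : ℕ) (lam : KPartition) : Prop :=
  ∀ i j : ℕ, lam.Mem (i, j) → lam.hook i j ≠ p

noncomputable def psize (lam : KPartition) : ℕ := Nat.card {b : ℕ × ℕ | lam.Mem b}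

noncomputable def intSize (k : ℕ) (lam : KPartition) : ℕ :=
  Nat.card {b : ℕ × ℕ | lam.Mem b ∧ k < lam.hook b.1 b.2}

noncomputable def bdrySize (k : ℕ) (lam : KPartition) : ℕ :=
  Nat.card {b : ℕ × ℕ | lam.Mem b ∧ lam.hook b.1 b.2 ≤ k}

noncomputable def union (lam mu : KPartition) : KPartition :=
  ⟨fun i => max (lam.parts i) (mu.parts i),
   fun i j h => max_le_max (lam.antitone' i j h) (mu.antitone' i j h),
   by
     obtain ⟨N, hN⟩ := lam.finite'
     obtain ⟨M, hM⟩ := mu.finite'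
     refine ⟨max N M, fun i hi => ?_⟩
     show max (lam.parts i) (mu.parts i) = 0
     rw [hN i (le_trans (le_max_left _ _) hi), hM i (le_trans (le_max_right _ _) hi)]
     simp⟩

end KPartition

open KPartition

def diagIdx (b : ℕ × ℕ) : ℤ := (b.2 : ℤ) - (b.1 : ℤ)

def cellDist (b b' : ℕ × ℕ) : ℕ := (diagIdx b - diagIdx b').natAbs

def Contiguous (k : ℕ) (b b' : ℕ × ℕ) : Prop :=
  cellDist b b' = k ∨ cellDist b b' = k + 1

def HasAddable (lam : KPartition) (i : ℕ) : Prop :=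
  i = 0 ∨ lam.parts i < lam.parts (i - 1)

def addCorner (lam : KPartition) (i : ℕ) : ℕ × ℕ := (i, lam.parts i)

def IsAddableCell (lam : KPartition) (b : ℕ × ℕ) : Prop :=
  HasAddable lam b.1 ∧ b.2 = lam.parts b.1

def HasRemovable (lam : KPartition) (i : ℕ) : Prop := lam.parts (i + 1) < lam.parts i

def remCorner (lam : KPartition) (i : ℕ) : ℕ × ℕ := (i, lam.parts i - 1)

def KConnectedBelow (k : ℕ) (lam : KPartition) (r r' : ℕ) : Prop :=
  r' < r ∧ HasAddable lam r ∧ HasAddable lam r' ∧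
    cellDist (addCorner lam r) (addCorner lam r') ≤ k + 1 ∧
    ∀ r'' : ℕ, r'' < r' → HasAddable lam r'' →
      ¬ cellDist (addCorner lam r) (addCorner lam r'') ≤ k + 1

def ContigConnected (k : ℕ) (lam : KPartition) (r r' : ℕ) : Prop :=
  KConnectedBelow k lam r r' ∧ Contiguous k (addCorner lam r) (addCorner lam r')

inductive InChain (k : ℕ) (lam : KPartition) (r : ℕ) : ℕ → Prop
  | refl : InChain k lam r r
  | step {s s' : ℕ} : InChain k lam r s → KConnectedBelow k lam s s' → InChain k lam r s'

noncomputable def iCC (k : ℕ) (lam : KPartition) (top bot : ℕ) (ct cb : Bool) : ℕ :=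
  Nat.card {s : ℕ | InChain k lam top s ∧ (if cb then bot ≤ s else bot < s) ∧
    (ct = true ∨ s ≠ top)}

noncomputable def rowUp (lam mu : KPartition) : ℕ := sSup {i : ℕ | lam.parts i < mu.parts i}

noncomputable def rowDown (lam mu : KPartition) : ℕ := sInf {i : ℕ | lam.parts i < mu.parts i}

noncomputable def chargeStepVal (k : ℕ) (sh : KPartition) (r r' : ℕ) : ℤ :=
  if r' ≤ r then (iCC k sh r r' true false : ℤ) else -(iCC k sh r' r false true : ℤ)

noncomputable def cochargeStepVal (k : ℕ) (sh : KPartition) (r r' : ℕ) : ℤ :=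
  if r' < r then -(iCC k sh r r' false false : ℤ) else (iCC k sh r' r true true : ℤ)

noncomputable def chargeLet (k : ℕ) (T : ℕ → KPartition) : ℕ → ℤ
  | 0 => 0
  | 1 => 0
  | n + 2 =>
    chargeLet k T (n + 1) +
      chargeStepVal k (T (n + 1)) (rowUp (T n) (T (n + 1)) + 1)
        (rowUp (T (n + 1)) (T (n + 2)))

noncomputable def cochargeLet (k : ℕ) (T : ℕ → KPartition) : ℕ → ℤ
  | 0 => 0
  | 1 => 0
  | n + 2 =>
    cochargeLet k T (n + 1) +
      cochargeStepVal k (T (n + 1)) (rowDown (T n) (T (n + 1)) + 1)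
        (rowDown (T (n + 1)) (T (n + 2)))

noncomputable def chargeTab (k : ℕ) (T : ℕ → KPartition) (N : ℕ) : ℤ :=
  ∑ n ∈ Finset.range N, chargeLet k T (n + 1)

noncomputable def cochargeTab (k : ℕ) (T : ℕ → KPartition) (N : ℕ) : ℤ :=
  ∑ n ∈ Finset.range N, cochargeLet k T (n + 1)

def skewSet (lam mu : KPartition) : Set (ℕ × ℕ) := {b | mu.Mem b ∧ ¬ lam.Mem b}

def IsStringOf (k : ℕ) (lam mu : KPartition) (ℓ : ℕ) (a : ℕ → ℕ × ℕ) : Prop :=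
  KPartition.Le lam mu ∧
  (∀ b : ℕ × ℕ, b ∈ skewSet lam mu ↔ ∃ i < ℓ, a i = b) ∧
  (∀ i j : ℕ, i < ℓ → j < ℓ → a i = a j → i = j) ∧
  (∀ i : ℕ, i + 1 < ℓ → (a (i + 1)).1 < (a i).1 ∧ Contiguous k (a i) (a (i + 1)))

def IsRowTypeStringOf (k : ℕ) (lam mu : KPartition) (ℓ : ℕ) (a : ℕ → ℕ × ℕ) : Prop :=
  IsStringOf k lam mu ℓ a ∧ ∀ i : ℕ, rsk k mu i = rsk k lam i

def IsColTypeStringOf (k : ℕ) (lam mu : KPartition) (ℓ : ℕ) (a : ℕ → ℕ × ℕ) : Prop :=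
  IsStringOf k lam mu ℓ a ∧ ∀ j : ℕ, csk k mu j = csk k lam j

def TranslateBy (v : ℤ × ℤ) (b b' : ℕ × ℕ) : Prop :=
  (b'.1 : ℤ) = (b.1 : ℤ) + v.1 ∧ (b'.2 : ℤ) = (b.2 : ℤ) + v.2

def IsRowMove (k ℓ r : ℕ) (lam mu : KPartition) : Prop :=
  1 ≤ r ∧ 1 ≤ ℓ ∧ IsKShape k lam ∧ IsKShape k mu ∧
  ∃ (c : ℕ → KPartition) (a : ℕ → ℕ → ℕ × ℕ),
    c 0 = lam ∧ c r = mu ∧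
    (∀ i < r, IsRowTypeStringOf k (c i) (c (i + 1)) ℓ (a i)) ∧
    (∀ i < r, ∃ v : ℤ × ℤ, ∀ t < ℓ, TranslateBy v (a 0 t) (a i t)) ∧
    (∀ i : ℕ, i + 1 < r → (a (i + 1) 0).2 = (a i 0).2 + 1)

def IsColMove (k ℓ r : ℕ) (lam mu : KPartition) : Prop :=
  1 ≤ r ∧ 1 ≤ ℓ ∧ IsKShape k lam ∧ IsKShape k mu ∧
  ∃ (c : ℕ → KPartition) (a : ℕ → ℕ → ℕ × ℕ),
    c 0 = lam ∧ c r = mu ∧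
    (∀ i < r, IsColTypeStringOf k (c i) (c (i + 1)) ℓ (a i)) ∧
    (∀ i < r, ∃ v : ℤ × ℤ, ∀ t < ℓ, TranslateBy v (a 0 t) (a i t)) ∧
    (∀ i : ℕ, i + 1 < r → (a (i + 1) (ℓ - 1)).1 = (a i (ℓ - 1)).1 + 1)

def IsMoveOf (k ℓ r : ℕ) (isRow : Bool) (lam mu : KPartition) : Prop :=
  if isRow then IsRowMove k ℓ r lam mu else IsColMove k ℓ r lam mu

def MoveRel (k : ℕ) (lam mu : KPartition) : Prop :=
  ∃ ℓ r : ℕ, IsRowMove k ℓ r lam mu ∨ IsColMove k ℓ r lam mu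

def IsCover (k : ℕ) (lam mu : KPartition) : Prop :=
  IsKShape k lam ∧ IsKShape k mu ∧
  ∃ (ℓ : ℕ) (a : ℕ → ℕ × ℕ), 1 ≤ ℓ ∧ IsStringOf k lam mu ℓ a ∧
    (∃ i : ℕ, rsk k lam i < rsk k mu i) ∧ (∃ j : ℕ, csk k lam j < csk k mu j)

noncomputable def topCellC (lam mu : KPartition) : ℕ × ℕ :=
  (rowUp lam mu, lam.parts (rowUp lam mu))

noncomputable def botCellC (lam mu : KPartition) : ℕ × ℕ :=
  (rowDown lam mu, lam.parts (rowDown lam mu))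

def CanContinueBelow (k : ℕ) (lam mu : KPartition) : Prop :=
  ∃ i : ℕ, HasAddable lam i ∧ i < rowDown lam mu ∧
    Contiguous k (botCellC lam mu) (addCorner lam i)

def CanContinueAbove (k : ℕ) (lam mu : KPartition) : Prop :=
  ∃ i : ℕ, HasAddable lam i ∧ rowUp lam mu < i ∧
    Contiguous k (addCorner lam i) (topCellC lam mu)

def RevContinueBelow (k : ℕ) (lam mu : KPartition) : Prop :=
  ∃ i : ℕ, HasRemovable mu i ∧ i < rowDown lam mu ∧
    Contiguous k (botCellC lam mu) (remCorner mu i)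

def RevContinueAbove (k : ℕ) (lam mu : KPartition) : Prop :=
  ∃ i : ℕ, HasRemovable mu i ∧ rowUp lam mu < i ∧
    Contiguous k (remCorner mu i) (topCellC lam mu)

def IsMaximalCover (k : ℕ) (lam mu : KPartition) : Prop :=
  IsCover k lam mu ∧ ¬ CanContinueAbove k lam mu ∧ ¬ CanContinueBelow k lam mu

def IsReverseMaximalCover (k : ℕ) (lam mu : KPartition) : Prop :=
  IsCover k lam mu ∧ ¬ RevContinueAbove k lam mu ∧ ¬ RevContinueBelow k lam mu

def StdKShapeTableau (k N : ℕ) (T : ℕ → KPartition) : Prop :=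
  T 0 = KPartition.empty ∧ ∀ n < N, IsCover k (T n) (T (n + 1))

def HorizStrip (lam mu : KPartition) : Prop :=
  KPartition.Le lam mu ∧ ∀ j : ℕ, mu.conj j ≤ lam.conj j + 1

def VertStrip (lam mu : KPartition) : Prop :=
  KPartition.Le lam mu ∧ ∀ i : ℕ, mu.parts i ≤ lam.parts i + 1

def IsStdKTableau (k N : ℕ) (T : ℕ → KPartition) : Prop :=
  T 0 = KPartition.empty ∧ (∀ n ≤ N, IsCore (k + 1) (T n)) ∧
  ∀ n < N, HorizStrip (T n) (T (n + 1)) ∧ VertStrip (T n) (T (n + 1)) ∧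
    bdrySize k (T (n + 1)) = bdrySize k (T n) + 1

def cellResidue (k : ℕ) (b : ℕ × ℕ) : ZMod (k + 1) :=
  (b.2 : ZMod (k + 1)) - (b.1 : ZMod (k + 1))

def GroundPos (lam : KPartition) (i j : ℕ) : Prop :=
  1 ≤ i ∧ lam.parts i ≤ j ∧ j < lam.parts (i - 1)

noncomputable def diagCount (k : ℕ) (e : ZMod (k + 1)) (b b' : ℕ × ℕ) : ℕ :=
  Nat.card {d : ℤ | min (diagIdx b) (diagIdx b') < d ∧
    d < max (diagIdx b) (diagIdx b') ∧ (d : ZMod (k + 1)) = e}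

noncomputable def upCell (lam mu : KPartition) : ℕ × ℕ :=
  (rowUp lam mu, lam.parts (rowUp lam mu))

def shiftU (S : Set (ℕ × ℕ)) : Set (ℕ × ℕ) := (fun b => (b.1 + 1, b.2)) '' S


section Aux
open KPartition

lemma parts_anti (lam : KPartition) {i j : ℕ} (h : i ≤ j) : lam.parts j ≤ lam.parts i :=
  lam.antitone' i j h

lemma conj_spec (lam : KPartition) (j : ℕ) : lam.parts (lam.conj j) ≤ j :=
  @Nat.find_spec (fun i => lam.parts i ≤ j) (Classical.decPred _) _

lemma conj_min' (lam : KPartition) {i j : ℕ} (h : lam.parts i ≤ j) : lam.conj j ≤ i :=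
  @Nat.find_min' (fun i => lam.parts i ≤ j) (Classical.decPred _) _ i h

lemma lt_conj_iff (lam : KPartition) (i j : ℕ) : i < lam.conj j ↔ j < lam.parts i := by
  constructor
  · intro h
    by_contra hc
    push_neg at hc
    exact absurd (conj_min' lam hc) (by omega)
  · intro h
    by_contra hc
    push_neg at hc
    have := parts_anti lam hc
    have hs : lam.parts (lam.conj j) ≤ j := conj_spec lam j
    omega

lemma conj_le (lam : KPartition) {i j : ℕ} (h : lam.parts i ≤ j) : lam.conj j ≤ i := by
  by_contra hc
  push_neg at hc
  rw [lt_conj_iff] at hc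
  omega

lemma diag_addCorner (lam : KPartition) (i : ℕ) :
    diagIdx (addCorner lam i) = (lam.parts i : ℤ) - i := by
  simp [diagIdx, addCorner]

lemma diag_corner_anti (lam : KPartition) {i i' : ℕ} (h : i ≤ i') :
    diagIdx (addCorner lam i') ≤ diagIdx (addCorner lam i) := by
  have := parts_anti lam h
  rw [diag_addCorner, diag_addCorner]
  omega

lemma diag_corner_strict (lam : KPartition) {i i' : ℕ} (h : i < i') :
    diagIdx (addCorner lam i') < diagIdx (addCorner lam i) := by
  have := parts_anti lam h.le
  rw [diag_addCorner, diag_addCorner]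
  omega

lemma cellDist_le_iff (b b' : ℕ × ℕ) (m : ℕ) :
    cellDist b b' ≤ m ↔ (diagIdx b - diagIdx b').natAbs ≤ m := Iff.rfl

lemma kcb_lt {k : ℕ} {lam : KPartition} {s s' : ℕ} (h : KConnectedBelow k lam s s') : s' < s := h.1

lemma kcb_unique {k : ℕ} {lam : KPartition} {s a b : ℕ}
    (ha : KConnectedBelow k lam s a) (hb : KConnectedBelow k lam s b) : a = b := by
  by_contra hne
  rcases Nat.lt_or_ge a b with h | h
  · exact hb.2.2.2.2 a h ha.2.2.1 ha.2.2.2.1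
  · have : b < a := lt_of_le_of_ne h (Ne.symm hne)
    exact ha.2.2.2.2 b this hb.2.2.1 hb.2.2.2.1

lemma inChain_le {k : ℕ} {lam : KPartition} {r s : ℕ} (h : InChain k lam r s) : s ≤ r := by
  induction h with
  | refl => exact le_rfl
  | step h1 h2 ih => exact le_trans (kcb_lt h2).le ih

lemma inChain_decomp {k : ℕ} {lam : KPartition} {r u : ℕ} (hu : KConnectedBelow k lam r u)
    (s : ℕ) : InChain k lam r s ↔ s = r ∨ InChain k lam u s := by
  constructor
  · intro h
    induction h with
    | refl => exact Or.inl rfl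
    | step h1 h2 ih =>
      rcases ih with rfl | h3
      · exact Or.inr (by rw [kcb_unique hu h2]; exact InChain.refl)
      · exact Or.inr (InChain.step h3 h2)
  · rintro (rfl | h)
    · exact InChain.refl
    · induction h with
      | refl => exact InChain.step InChain.refl hu
      | step h1 h2 ih => exact InChain.step ih h2

lemma cset_finite {k : ℕ} (lam : KPartition) (r : ℕ) :
    {s : ℕ | InChain k lam r s}.Finite :=
  Set.Finite.subset (Set.finite_Iic r) (fun s hs => inChain_le hs)

end Aux
section StringPart
open KPartition

structure SD (k ℓ : ℕ) (sh mu : KPartition) (a : ℕ → ℕ × ℕ) : Prop where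
  hk : 2 ≤ k
  hl : 1 ≤ ℓ
  hle : KPartition.Le sh mu
  hskew : ∀ b, b ∈ skewSet sh mu ↔ ∃ i < ℓ, a i = b
  hinj : ∀ i j : ℕ, i < ℓ → j < ℓ → a i = a j → i = j
  hstep : ∀ i : ℕ, i + 1 < ℓ → (a (i + 1)).1 < (a i).1 ∧ Contiguous k (a i) (a (i + 1))

variable {k ℓ : ℕ} {sh mu : KPartition} {a : ℕ → ℕ × ℕ}

lemma SD.row_lt (h : SD k ℓ sh mu a) {i j : ℕ} (hij : i < j) (hj : j < ℓ) :
    (a j).1 < (a i).1 := by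
  induction j with
  | zero => omega
  | succ m ih =>
    have h2 := (h.hstep m hj).1
    rcases Nat.lt_or_ge i m with h3 | h3
    · exact lt_trans h2 (ih h3 (by omega))
    · have : i = m := by omega
      subst this; exact h2

lemma SD.row_le (h : SD k ℓ sh mu a) {i j : ℕ} (hij : i ≤ j) (hj : j < ℓ) :
    (a j).1 ≤ (a i).1 := by
  rcases Nat.lt_or_ge i j with h3 | h3
  · exact (h.row_lt h3 hj).le
  · have : i = j := by omega
    subst this; exact le_rfl

lemma SD.row_inj (h : SD k ℓ sh mu a) {i j : ℕ} (hi : i < ℓ) (hj : j < ℓ)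
    (he : (a i).1 = (a j).1) : i = j := by
  rcases lt_trichotomy i j with h3 | h3 | h3
  · have := h.row_lt h3 hj; omega
  · exact h3
  · have := h.row_lt h3 hi; omega

lemma SD.mem_skew (h : SD k ℓ sh mu a) {t : ℕ} (ht : t < ℓ) :
    sh.parts (a t).1 ≤ (a t).2 ∧ (a t).2 < mu.parts (a t).1 := by
  have := (h.hskew (a t)).2 ⟨t, ht, rfl⟩
  obtain ⟨h1, h2⟩ := this
  exact ⟨Nat.le_of_not_lt h2, h1⟩

lemma SD.col_eq (h : SD k ℓ sh mu a) {t : ℕ} (ht : t < ℓ) :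
    (a t).2 = sh.parts (a t).1 := by
  obtain ⟨h1, h2⟩ := h.mem_skew ht
  by_contra hne
  have hlt : sh.parts (a t).1 < (a t).2 := by omega
  have hsk : ((a t).1, (a t).2 - 1) ∈ skewSet sh mu := by
    constructor
    · show (a t).2 - 1 < mu.parts (a t).1
      omega
    · show ¬ ((a t).2 - 1 < sh.parts (a t).1)
      omega
  obtain ⟨t', ht', he⟩ := (h.hskew _).1 hsk
  have : t' = t := h.row_inj ht' ht (by rw [he])
  subst this
  have h9 : (a t').2 = (a t').2 - 1 := congrArg Prod.snd he
  omega

lemma SD.parts_row (h : SD k ℓ sh mu a) {t : ℕ} (ht : t < ℓ) :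
    mu.parts (a t).1 = sh.parts (a t).1 + 1 := by
  obtain ⟨h1, h2⟩ := h.mem_skew ht
  have hc := h.col_eq ht
  by_contra hne
  have hgt : sh.parts (a t).1 + 1 < mu.parts (a t).1 := by omega
  have hsk : ((a t).1, sh.parts (a t).1 + 1) ∈ skewSet sh mu := by
    constructor
    · show sh.parts (a t).1 + 1 < mu.parts (a t).1
      omega
    · show ¬ (sh.parts (a t).1 + 1 < sh.parts (a t).1)
      omega
  obtain ⟨t', ht', he⟩ := (h.hskew _).1 hsk
  have : t' = t := h.row_inj ht' ht (by rw [he])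
  subst this
  have h9 : (a t').2 = sh.parts (a t').1 + 1 := congrArg Prod.snd he
  omega

lemma SD.changed_iff (h : SD k ℓ sh mu a) (i : ℕ) :
    sh.parts i < mu.parts i ↔ ∃ t < ℓ, (a t).1 = i := by
  constructor
  · intro hi
    have hsk : (i, sh.parts i) ∈ skewSet sh mu := by
      exact ⟨hi, by show ¬ (sh.parts i < sh.parts i); omega⟩
    obtain ⟨t, ht, he⟩ := (h.hskew _).1 hsk
    exact ⟨t, ht, by rw [he]⟩
  · rintro ⟨t, ht, rfl⟩
    have := h.parts_row ht
    omega

lemma SD.corner_eq (h : SD k ℓ sh mu a) {t : ℕ} (ht : t < ℓ) :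
    addCorner sh (a t).1 = a t := by
  have := h.col_eq ht
  show ((a t).1, sh.parts (a t).1) = a t
  rw [← this]

lemma SD.rowUp_eq (h : SD k ℓ sh mu a) : rowUp sh mu = (a 0).1 := by
  have hg : IsGreatest {i : ℕ | sh.parts i < mu.parts i} ((a 0).1) := by
    constructor
    · exact (h.changed_iff _).2 ⟨0, h.hl, rfl⟩
    · intro i hi
      obtain ⟨t, ht, rfl⟩ := (h.changed_iff i).1 hi
      exact h.row_le (Nat.zero_le t) ht
  exact hg.csSup_eq

lemma SD.rowDown_eq (h : SD k ℓ sh mu a) : rowDown sh mu = (a (ℓ - 1)).1 := by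
  have hg : IsLeast {i : ℕ | sh.parts i < mu.parts i} ((a (ℓ - 1)).1) := by
    constructor
    · exact (h.changed_iff _).2 ⟨ℓ - 1, by have := h.hl; omega, rfl⟩
    · intro i hi
      obtain ⟨t, ht, rfl⟩ := (h.changed_iff i).1 hi
      exact h.row_le (by omega) (by have := h.hl; omega)
  exact hg.csInf_eq

lemma SD.addable (h : SD k ℓ sh mu a) {t : ℕ} (ht : t < ℓ) : HasAddable sh (a t).1 := by
  rcases Nat.eq_zero_or_pos (a t).1 with h0 | h0
  · exact Or.inl h0
  right
  by_contra hc
  push_neg at hc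
  have heq : sh.parts ((a t).1 - 1) = sh.parts (a t).1 := by
    have := parts_anti sh (show (a t).1 - 1 ≤ (a t).1 by omega)
    omega
  have hch : sh.parts ((a t).1 - 1) < mu.parts ((a t).1 - 1) := by
    have h1 := mu.antitone' ((a t).1 - 1) ((a t).1) (by omega)
    have h2 := h.parts_row ht
    omega
  obtain ⟨t', ht', he⟩ := (h.changed_iff _).1 hch
  have htt' : t < t' := by
    rcases lt_trichotomy t t' with h3 | h3 | h3
    · exact h3
    · subst h3; omega
    · have := h.row_lt h3 ht; omega
  have ht1 : t + 1 < ℓ := by omega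
  have he1 : (a (t + 1)).1 = (a t).1 - 1 := by
    have h4 := h.row_lt (show t < t + 1 by omega) ht1
    have h5 : (a t').1 ≤ (a (t + 1)).1 := h.row_le (by omega) ht'
    omega
  -- contiguity contradiction
  have hcont := (h.hstep t ht1).2
  have hc1 := h.col_eq ht
  have hc2 := h.col_eq ht1
  have hd : diagIdx (a (t + 1)) = diagIdx (a t) + 1 := by
    show ((a (t+1)).2 : ℤ) - (a (t+1)).1 = ((a t).2 : ℤ) - (a t).1 + 1
    rw [hc1, hc2, he1, heq]
    have : 1 ≤ (a t).1 := h0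
    push_cast [Nat.cast_sub this]
    ring
  rcases hcont with h5 | h5 <;>
  · have : cellDist (a t) (a (t + 1)) = (diagIdx (a t) - diagIdx (a (t + 1))).natAbs := rfl
    rw [this, hd] at h5
    simp only [sub_add_cancel_left] at h5
    have hk := h.hk
    omega

lemma SD.diag_step (h : SD k ℓ sh mu a) {t : ℕ} (ht : t + 1 < ℓ) :
    diagIdx (a (t + 1)) = diagIdx (a t) + k ∨ diagIdx (a (t + 1)) = diagIdx (a t) + (k + 1) := by
  have hrow := (h.hstep t ht).1
  have hlt : diagIdx (a t) < diagIdx (a (t + 1)) := by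
    have := diag_corner_strict sh hrow
    rwa [h.corner_eq (by omega : t < ℓ), h.corner_eq ht] at this
  have hcont := (h.hstep t ht).2
  rcases hcont with h5 | h5 <;>
  · have : cellDist (a t) (a (t + 1)) = (diagIdx (a t) - diagIdx (a (t + 1))).natAbs := rfl
    rw [this] at h5
    omega

end StringPart
section StringPart2
open KPartition

variable {k ℓ : ℕ} {sh mu : KPartition} {a : ℕ → ℕ × ℕ}

lemma SD.diag_corner_ge (h : SD k ℓ sh mu a) {t r'' : ℕ} (ht : t < ℓ)
    (hr : r'' ≤ (a t).1) :
    diagIdx (a t) + ((a t).1 - r'' : ℕ) ≤ diagIdx (addCorner sh r'') := by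
  have h1 := parts_anti sh hr
  have hc := h.col_eq ht
  rw [diag_addCorner]
  show ((a t).2 : ℤ) - (a t).1 + ((a t).1 - r'' : ℕ) ≤ (sh.parts r'' : ℤ) - r''
  rw [hc]
  push_cast [Nat.cast_sub hr]
  omega

lemma SD.kcb_step (h : SD k ℓ sh mu a) {t : ℕ} (ht : t + 1 < ℓ) :
    KConnectedBelow k sh (a t).1 (a (t + 1)).1 := by
  have htl : t < ℓ := by omega
  have hrow := (h.hstep t ht).1
  refine ⟨hrow, h.addable htl, h.addable ht, ?_, ?_⟩
  · rw [h.corner_eq htl, h.corner_eq ht]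
    rcases (h.hstep t ht).2 with h5 | h5
    · show (cellDist (a t) (a (t+1))) ≤ k + 1; omega
    · show (cellDist (a t) (a (t+1))) ≤ k + 1; omega
  · intro r'' hr2 hadd hdist
    rw [h.corner_eq htl] at hdist
    -- basic diag facts
    have hds := h.diag_step ht
    have hge : diagIdx (a (t+1)) + ((a (t+1)).1 - r'' : ℕ) ≤ diagIdx (addCorner sh r'') :=
      h.diag_corner_ge ht (by omega)
    have hgt : diagIdx (a t) < diagIdx (addCorner sh r'') := by
      have := diag_corner_strict sh (show r'' < (a t).1 by omega)
      rwa [h.corner_eq htl] at this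
    have hub : diagIdx (addCorner sh r'') ≤ diagIdx (a t) + (k + 1) := by
      have : cellDist (a t) (addCorner sh r'') = (diagIdx (a t) - diagIdx (addCorner sh r'')).natAbs := rfl
      rw [this] at hdist
      omega
    -- forces r'' = (a (t+1)).1 - 1 and k-step
    have hr1 : (a (t+1)).1 - r'' = 1 := by omega
    have hdr : diagIdx (addCorner sh r'') ≤ diagIdx (a (t+1)) + 1 := by omega
    -- r'' is a changed row
    have hple : sh.parts r'' ≤ sh.parts (a (t+1)).1 := by
      have hc := h.col_eq ht
      rw [diag_addCorner] at hdr
      have : ((a (t+1)).2 : ℤ) - (a (t+1)).1 + 1 ≥ (sh.parts r'' : ℤ) - r'' := hdr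
      rw [hc] at this
      omega
    have hch : sh.parts r'' < mu.parts r'' := by
      have h1 := mu.antitone' r'' ((a (t+1)).1) (by omega)
      have h2 := h.parts_row ht
      omega
    obtain ⟨t'', ht'', he⟩ := (h.changed_iff _).1 hch
    have htt : t + 1 < t'' := by
      rcases lt_trichotomy (t+1) t'' with h3 | h3 | h3
      · exact h3
      · subst h3; omega
      · have := h.row_lt h3 (by omega); omega
    have ht2 : t + 2 < ℓ := by omega
    have he2 : (a (t + 2)).1 = r'' := by
      have h4 := h.row_lt (show t + 1 < t + 2 by omega) ht2
      have h5 : (a t'').1 ≤ (a (t + 2)).1 := h.row_le (by omega) ht''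
      omega
    -- contiguity contradiction at step t+1
    have hds2 := h.diag_step (show (t+1) + 1 < ℓ from ht2)
    have hcol2 := h.col_eq ht2
    have hparts : sh.parts r'' = sh.parts (a (t+1)).1 := by
      have := parts_anti sh (show r'' ≤ (a (t+1)).1 by omega)
      omega
    have hdiag2 : diagIdx (a (t + 2)) = diagIdx (a (t+1)) + 1 := by
      show ((a (t+2)).2 : ℤ) - (a (t+2)).1 = ((a (t+1)).2 : ℤ) - (a (t+1)).1 + 1
      rw [hcol2, he2, hparts, h.col_eq ht]
      have : (r'' : ℤ) = ((a (t+1)).1 : ℤ) - 1 := by omega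
      rw [this]
      ring
    have hk := h.hk
    have hbr : diagIdx (a (t+1+1)) = diagIdx (a (t+2)) := rfl
    omega

end StringPart2
section Gap
open KPartition

lemma card_helpers_ncard_Ico (a b : ℕ) : (Set.Ico a b).ncard = b - a := by
  rw [Set.ncard_eq_toFinset_card', Set.toFinset_Ico, Nat.card_Ico]

lemma parts_run_const (lam : KPartition) {i' s : ℕ}
    (h : ∀ m : ℕ, i' < m → m ≤ s → lam.parts m = lam.parts (m - 1)) :
    ∀ m : ℕ, i' ≤ m → m ≤ s → lam.parts m = lam.parts i' := by
  intro m
  induction m with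
  | zero => intro h1 _; have : i' = 0 := by omega
            rw [this]
  | succ n ih =>
    intro h1 h2
    rcases Nat.lt_or_ge i' (n + 1) with h3 | h3
    · have := h (n + 1) h3 h2
      simp only [Nat.add_sub_cancel] at this
      rw [this]
      exact ih (by omega) (by omega)
    · have : i' = n + 1 := by omega
      rw [this]

lemma gap_lemma {k : ℕ} (hk : 2 ≤ k) {lam : KPartition} (hks : IsKShape k lam) {s : ℕ}
    (hadd : HasAddable lam s) (hs : 1 ≤ s) :
    ∃ i' : ℕ, HasAddable lam i' ∧ i' < s ∧
      diagIdx (addCorner lam i') ≤ diagIdx (addCorner lam s) + (k + 1) := by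
  classical
  set i' := Nat.findGreatest (HasAddable lam) (s - 1) with hi'def
  have h0 : HasAddable lam 0 := Or.inl rfl
  have hi' : HasAddable lam i' := Nat.findGreatest_spec (Nat.zero_le (s - 1)) h0
  have hle' : i' ≤ s - 1 := Nat.findGreatest_le (s - 1)
  have hrun : ∀ m : ℕ, i' < m → m ≤ s - 1 → lam.parts m = lam.parts (m - 1) := by
    intro m h1 h2
    have hnot : ¬ HasAddable lam m := Nat.findGreatest_is_greatest h1 h2
    rw [HasAddable] at hnot
    push_neg at hnot
    have h3 := parts_anti lam (show m - 1 ≤ m by omega)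
    omega
  have hconst : ∀ m : ℕ, i' ≤ m → m ≤ s - 1 → lam.parts m = lam.parts i' :=
    parts_run_const lam hrun
  set p' := lam.parts i' with hp'def
  set p := lam.parts s with hpdef
  have hps1 : lam.parts (s - 1) = p' := hconst (s - 1) hle' le_rfl
  have hpp : p < p' := by
    rcases hadd with h1 | h1
    · omega
    · rw [← hps1]; exact h1
  refine ⟨i', hi', by omega, ?_⟩
  rw [diag_addCorner, diag_addCorner]
  -- suffices to bound the gap
  by_contra hctr
  push_neg at hctr
  have hgap : (p' - p) + (s - i') ≥ k + 2 := by
    have h1 : (p' : ℤ) - i' > (p : ℤ) - s + (k + 1) := hctr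
    omega
  set d := s - i' with hddef
  have hd1 : 1 ≤ d := by omega
  -- conj facts
  have hconj_ge_s : ∀ j : ℕ, j < p' → s ≤ lam.conj j := by
    intro j hj
    have : s - 1 < lam.conj j := (lt_conj_iff lam (s - 1) j).2 (by omega)
    omega
  rcases Nat.lt_or_ge d k.succ with hdk | hdk
  · -- Case B : d ≤ k, use csk
    have hc2 : p' - p ≥ k + 2 - d := by omega
    -- conj p = s
    have hconjp : lam.conj p = s := by
      have h1 : lam.conj p ≤ s := conj_min' lam le_rfl
      have h2 := hconj_ge_s p hpp
      omega
    have hconjp' : lam.conj (p' - 1) = s := by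
      have h1 : lam.conj (p' - 1) ≤ s := conj_min' lam (by omega)
      have h2 := hconj_ge_s (p' - 1) (by omega)
      omega
    -- csk k lam p ≤ k+1-(p'-p)
    have hsub : {m : ℕ | lam.Mem (m, p) ∧ lam.hook m p ≤ k} ⊆
        Set.Ico (s - (k + 1 - (p' - p))) s := by
      intro m hm
      obtain ⟨hmem, hhook⟩ := hm
      have hm1 : m < s := by
        have := (lt_conj_iff lam m p).2 hmem
        omega
      have hpm : p' ≤ lam.parts m := by
        rcases Nat.lt_or_ge m i' with h3 | h3
        · have := parts_anti lam (le_of_lt h3)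
          omega
        · have := hconst m h3 (by omega)
          omega
      rw [KPartition.hook, hconjp] at hhook
      constructor
      · omega
      · exact hm1
    have hcsk1 : csk k lam p ≤ k + 1 - (p' - p) := by
      rw [csk, Nat.card_coe_set_eq]
      calc ({m : ℕ | lam.Mem (m, p) ∧ lam.hook m p ≤ k}).ncard
          ≤ (Set.Ico (s - (k + 1 - (p' - p))) s).ncard :=
            Set.ncard_le_ncard hsub (Set.finite_Ico _ _)
        _ = s - (s - (k + 1 - (p' - p))) := by rw [card_helpers_ncard_Ico]
        _ ≤ k + 1 - (p' - p) := by omega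
    -- csk k lam (p'-1) ≥ d
    have hsup : Set.Ico i' s ⊆ {m : ℕ | lam.Mem (m, p' - 1) ∧ lam.hook m (p' - 1) ≤ k} := by
      intro m hm
      obtain ⟨h3, h4⟩ := hm
      have hpm : lam.parts m = p' := hconst m h3 (by omega)
      constructor
      · show p' - 1 < lam.parts m
        omega
      · rw [KPartition.hook, hconjp', hpm]
        omega
    have hfin : {m : ℕ | lam.Mem (m, p' - 1) ∧ lam.hook m (p' - 1) ≤ k}.Finite := by
      apply Set.Finite.subset (Set.finite_Iio s)
      intro m hm
      have := (lt_conj_iff lam m (p' - 1)).2 hm.1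
      show m < s
      omega
    have hcsk2 : d ≤ csk k lam (p' - 1) := by
      rw [csk, Nat.card_coe_set_eq]
      calc d = (Set.Ico i' s).ncard := by rw [card_helpers_ncard_Ico]
        _ ≤ _ := Set.ncard_le_ncard hsup hfin
    have := hks.2 p (p' - 1) (by omega)
    omega
  · -- Case A : d ≥ k + 1, use rsk
    have hrsk0 : rsk k lam i' = 0 := by
      have hempty : {j : ℕ | lam.Mem (i', j) ∧ lam.hook i' j ≤ k} = ∅ := by
        ext j
        simp only [Set.mem_setOf_eq, Set.mem_empty_iff_false, iff_false, not_and]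
        intro hmem hhook
        have h1 : j < p' := hmem
        have h2 := hconj_ge_s j h1
        rw [KPartition.hook] at hhook
        omega
      rw [rsk, hempty]
      simp
    -- last nonempty row
    have hc01 : 1 ≤ lam.conj 0 := by
      have h1 : lam.parts 0 ≥ p' := parts_anti lam (Nat.zero_le i')
      have := (lt_conj_iff lam 0 0).2 (by omega)
      omega
    set ib := lam.conj 0 - 1 with hibdef
    have hq : 1 ≤ lam.parts ib := by
      have := (lt_conj_iff lam ib 0).1 (by omega)
      omega
    set q := lam.parts ib with hqdef
    have hconjq : lam.conj (q - 1) = ib + 1 := by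
      have h1 : lam.conj (q - 1) ≤ ib + 1 := by
        apply conj_min'
        have h3 : ib + 1 = lam.conj 0 := by omega
        rw [h3]
        have h2 : lam.parts (lam.conj 0) ≤ 0 := conj_spec lam 0
        omega
      have h2 : ib < lam.conj (q - 1) := (lt_conj_iff lam ib (q - 1)).2 (by omega)
      omega
    have hmem : q - 1 ∈ {j : ℕ | lam.Mem (ib, j) ∧ lam.hook ib j ≤ k} := by
      constructor
      · show q - 1 < q
        omega
      · rw [KPartition.hook, hconjq]
        omega
    have hfin : {j : ℕ | lam.Mem (ib, j) ∧ lam.hook ib j ≤ k}.Finite := by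
      apply Set.Finite.subset (Set.finite_Iio q)
      intro j hj
      exact hj.1
    have hrsk1 : 1 ≤ rsk k lam ib := by
      rw [rsk, Nat.card_coe_set_eq]
      exact (Set.ncard_pos hfin).2 ⟨q - 1, hmem⟩
    have hible : i' ≤ ib := by
      have : s - 1 < lam.conj 0 := (lt_conj_iff lam (s - 1) 0).2 (by omega)
      omega
    have := hks.1 i' ib hible
    omega

end Gap
section ChainCount
open KPartition

lemma iCC_tf (k : ℕ) (sh : KPartition) (top bot : ℕ) :
    (iCC k sh top bot true false : ℤ) =
      (({s : ℕ | InChain k sh top s} ∩ Set.Ioi bot).ncard : ℤ) := by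
  rw [iCC, Nat.card_coe_set_eq]
  congr 2
  ext s
  simp [Set.mem_setOf_eq]

lemma iCC_ft (k : ℕ) (sh : KPartition) (top bot : ℕ) :
    (iCC k sh top bot false true : ℤ) =
      ((({s : ℕ | InChain k sh top s} ∩ Set.Ici bot) \ {top}).ncard : ℤ) := by
  rw [iCC, Nat.card_coe_set_eq]
  congr 2
  ext s
  simp [Set.mem_setOf_eq]
  tauto

lemma cset_inter_finite (k : ℕ) (sh : KPartition) (r : ℕ) (X : Set ℕ) :
    ({s : ℕ | InChain k sh r s} ∩ X).Finite :=
  Set.Finite.inter_of_left (cset_finite sh r) X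

lemma ncard_decomp_mem {k : ℕ} {sh : KPartition} {r u : ℕ} (hu : KConnectedBelow k sh r u)
    {X : Set ℕ} (hr : r ∈ X) :
    ({s : ℕ | InChain k sh r s} ∩ X).ncard =
      ({s : ℕ | InChain k sh u s} ∩ X).ncard + 1 := by
  have hset : {s : ℕ | InChain k sh r s} ∩ X =
      insert r ({s : ℕ | InChain k sh u s} ∩ X) := by
    ext s
    simp only [Set.mem_inter_iff, Set.mem_setOf_eq, Set.mem_insert_iff]
    rw [inChain_decomp hu]
    constructor
    · rintro ⟨h1 | h1, h2⟩
      · exact Or.inl h1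
      · exact Or.inr ⟨h1, h2⟩
    · rintro (rfl | ⟨h1, h2⟩)
      · exact ⟨Or.inl rfl, hr⟩
      · exact ⟨Or.inr h1, h2⟩
  rw [hset, Set.ncard_insert_of_notMem _ (cset_inter_finite k sh u X)]
  intro hmem
  have := inChain_le hmem.1
  have := kcb_lt hu
  omega

lemma ncard_decomp_notmem {k : ℕ} {sh : KPartition} {r u : ℕ} (hu : KConnectedBelow k sh r u)
    {X : Set ℕ} (hr : r ∉ X) :
    ({s : ℕ | InChain k sh r s} ∩ X).ncard =
      ({s : ℕ | InChain k sh u s} ∩ X).ncard := by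
  congr 1
  ext s
  simp only [Set.mem_inter_iff, Set.mem_setOf_eq]
  rw [inChain_decomp hu]
  constructor
  · rintro ⟨h1 | h1, h2⟩
    · exact absurd (h1 ▸ h2) hr
    · exact ⟨h1, h2⟩
  · rintro ⟨h1, h2⟩
    exact ⟨Or.inr h1, h2⟩

lemma step_exists {k : ℕ} {lam : KPartition} {s : ℕ} (hadds : HasAddable lam s)
    (hex : ∃ m : ℕ, HasAddable lam m ∧ m < s ∧
      cellDist (addCorner lam s) (addCorner lam m) ≤ k + 1) :
    ∃ u : ℕ, KConnectedBelow k lam s u ∧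
      ∀ m : ℕ, HasAddable lam m → m < s →
        cellDist (addCorner lam s) (addCorner lam m) ≤ k + 1 → u ≤ m := by
  classical
  set P : ℕ → Prop := fun m => HasAddable lam m ∧ m < s ∧
    cellDist (addCorner lam s) (addCorner lam m) ≤ k + 1 with hP
  have hexP : ∃ m, P m := hex
  set u := Nat.find hexP with hu
  obtain ⟨h1, h2, h3⟩ := Nat.find_spec hexP
  refine ⟨u, ⟨h2, hadds, h1, h3, ?_⟩, ?_⟩
  · intro r'' hr1 hr2 hr3
    exact Nat.find_min hexP hr1 ⟨hr2, by omega, hr3⟩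
  · intro m hm1 hm2 hm3
    exact Nat.find_min' hexP ⟨hm1, hm2, hm3⟩

end ChainCount
section ZoneCount
open KPartition

variable {k ℓ : ℕ} {sh mu : KPartition} {a : ℕ → ℕ × ℕ}

lemma SD.no_flush (h : SD k ℓ sh mu a) {s t : ℕ} (hadd : HasAddable sh s)
    (ht : t < ℓ) (hst : (a t).1 < s) :
    diagIdx (addCorner sh s) ≤ diagIdx (a t) - 2 := by
  have h1 : diagIdx (addCorner sh s) < diagIdx (a t) := by
    have := diag_corner_strict sh hst
    rwa [h.corner_eq ht] at this
  by_contra hc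
  push_neg at hc
  have heq : diagIdx (addCorner sh s) = diagIdx (a t) - 1 := by omega
  -- then s = (a t).1 + 1 and parts equal, contradicting addability
  have hs0 : 1 ≤ s := by omega
  have hpa : sh.parts s < sh.parts (s - 1) := by
    rcases hadd with h2 | h2
    · omega
    · exact h2
  have hle1 : sh.parts (s - 1) ≤ sh.parts (a t).1 := parts_anti sh (by omega)
  have hd1 : ((sh.parts s : ℤ) - s) = ((a t).2 : ℤ) - (a t).1 - 1 := by
    rw [diag_addCorner] at heq
    exact heq
  have hcol := h.col_eq ht
  have hd2 : diagIdx (addCorner sh (s - 1)) ≤ diagIdx (a t) := by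
    have := diag_corner_anti sh (show (a t).1 ≤ s - 1 by omega)
    rwa [h.corner_eq ht] at this
  rw [diag_addCorner] at hd2
  have : ((a t).2 : ℤ) - (a t).1 = (sh.parts (a t).1 : ℤ) - (a t).1 := by rw [hcol]
  omega

lemma SD.window_lemma (h : SD k ℓ sh mu a) {s t : ℕ} (ht : t + 1 < ℓ)
    (hadd : HasAddable sh s) (h1 : (a (t + 1)).1 < s) (h2 : s ≤ (a t).1) :
    ∃ u : ℕ, KConnectedBelow k sh s u ∧ u ≤ (a (t + 1)).1 ∧
      (t + 2 < ℓ → (a (t + 2)).1 < u) := by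
  have hds := h.diag_step ht
  have hcs_lb : diagIdx (a t) ≤ diagIdx (addCorner sh s) := by
    have := diag_corner_anti sh h2
    rwa [h.corner_eq (by omega : t < ℓ)] at this
  have hcs_ub : diagIdx (addCorner sh s) < diagIdx (a (t + 1)) := by
    have := diag_corner_strict sh h1
    rwa [h.corner_eq ht] at this
  have hdist : cellDist (addCorner sh s) (addCorner sh (a (t + 1)).1) ≤ k + 1 := by
    rw [h.corner_eq ht]
    show (diagIdx (addCorner sh s) - diagIdx (a (t + 1))).natAbs ≤ k + 1
    omega
  obtain ⟨u, hkcb, hmin⟩ := step_exists hadd ⟨(a (t + 1)).1, h.addable ht, h1, hdist⟩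
  refine ⟨u, hkcb, hmin _ (h.addable ht) h1 hdist, ?_⟩
  intro ht2
  -- u is within window: diag corner u ≤ diag corner s + k + 1
  have hdu : (diagIdx (addCorner sh s) - diagIdx (addCorner sh u)).natAbs ≤ k + 1 :=
    hkcb.2.2.2.1
  have hfl := h.no_flush hadd ht h1
  have hds2 := h.diag_step (show (t + 1) + 1 < ℓ from ht2)
  have hbr : diagIdx (a (t + 1 + 1)) = diagIdx (a (t + 2)) := rfl
  -- diag corner u < diag a (t+2), hence u > (a (t+2)).1
  by_contra hc
  push_neg at hc
  have : diagIdx (a (t + 2)) ≤ diagIdx (addCorner sh u) := by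
    have := diag_corner_anti sh hc
    rwa [h.corner_eq (by omega : t + 2 < ℓ)] at this
  omega

lemma SD.cross_lemma (h : SD k ℓ sh mu a) (hks : IsKShape k sh) {s : ℕ}
    (hadd : HasAddable sh s) (h1 : (a 0).1 < s) :
    ∃ u : ℕ, KConnectedBelow k sh s u ∧
      ((a 0).1 < u ∨ (u ≤ (a 0).1 ∧ (1 < ℓ → (a 1).1 < u))) := by
  obtain ⟨i', hi1, hi2, hi3⟩ := gap_lemma h.hk hks hadd (by omega)
  have hgt : diagIdx (addCorner sh s) < diagIdx (addCorner sh i') := diag_corner_strict sh hi2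
  have hdist : cellDist (addCorner sh s) (addCorner sh i') ≤ k + 1 := by
    show (diagIdx (addCorner sh s) - diagIdx (addCorner sh i')).natAbs ≤ k + 1
    omega
  obtain ⟨u, hkcb, hmin⟩ := step_exists hadd ⟨i', hi1, hi2, hdist⟩
  refine ⟨u, hkcb, ?_⟩
  rcases Nat.lt_or_ge (a 0).1 u with hcase | hcase
  · exact Or.inl hcase
  right
  refine ⟨hcase, ?_⟩
  intro hl2
  have hdu : (diagIdx (addCorner sh s) - diagIdx (addCorner sh u)).natAbs ≤ k + 1 :=
    hkcb.2.2.2.1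
  have hfl := h.no_flush hadd (by omega : 0 < ℓ) h1
  have hds := h.diag_step (show 0 + 1 < ℓ from hl2)
  have hbr : diagIdx (a (0 + 1)) = diagIdx (a 1) := rfl
  by_contra hc
  push_neg at hc
  have : diagIdx (a 1) ≤ diagIdx (addCorner sh u) := by
    have := diag_corner_anti sh hc
    rwa [h.corner_eq (by omega : 1 < ℓ)] at this
  omega

lemma SD.zone_count (h : SD k ℓ sh mu a) :
    ∀ s : ℕ, HasAddable sh s → ∀ t : ℕ, t + 1 < ℓ → (a (t + 1)).1 < s → s ≤ (a t).1 →
      ({x : ℕ | InChain k sh s x} ∩ Set.Ioc (a (ℓ - 1)).1 (a 0).1).ncard = ℓ - 1 - t := by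
  intro s
  induction s using Nat.strong_induction_on with
  | _ s ih =>
    intro hadd t ht h1 h2
    obtain ⟨u, hkcb, hu1, hu2⟩ := h.window_lemma ht hadd h1 h2
    have hsmem : s ∈ Set.Ioc (a (ℓ - 1)).1 (a 0).1 := by
      constructor
      · have : (a (ℓ - 1)).1 ≤ (a (t + 1)).1 := h.row_le (by omega) (by omega)
        omega
      · have : (a t).1 ≤ (a 0).1 := h.row_le (by omega) (by omega)
        omega
    rw [ncard_decomp_mem hkcb hsmem]
    rcases Nat.lt_or_ge (t + 2) ℓ with hc | hc
    · have := ih u (by omega) hkcb.2.2.1 (t + 1) (by omega) (hu2 hc) hu1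
      rw [this]
      omega
    · -- t = ℓ - 2 ; u ≤ rd so remaining set is empty
      have ht2 : t + 1 = ℓ - 1 := by omega
      have hempty : {x : ℕ | InChain k sh u x} ∩ Set.Ioc (a (ℓ - 1)).1 (a 0).1 = ∅ := by
        ext x
        simp only [Set.mem_inter_iff, Set.mem_setOf_eq, Set.mem_Ioc,
          Set.mem_empty_iff_false, iff_false, not_and]
        intro hx hx2
        have h5 := inChain_le hx
        have hu1' := hu1
        rw [ht2] at hu1'
        omega
      rw [hempty]
      simp
      omega

lemma SD.above_count (h : SD k ℓ sh mu a) (hks : IsKShape k sh) (hl2 : 2 ≤ ℓ) :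
    ∀ s : ℕ, HasAddable sh s → (a 0).1 < s →
      ({x : ℕ | InChain k sh s x} ∩ Set.Ioc (a (ℓ - 1)).1 (a 0).1).ncard = ℓ - 1 := by
  intro s
  induction s using Nat.strong_induction_on with
  | _ s ih =>
    intro hadd h1
    obtain ⟨u, hkcb, hu⟩ := h.cross_lemma hks hadd h1
    have hnot : s ∉ Set.Ioc (a (ℓ - 1)).1 (a 0).1 := by
      simp only [Set.mem_Ioc, not_and]
      omega
    rw [ncard_decomp_notmem hkcb hnot]
    rcases hu with hcase | ⟨hcase, hcase2⟩
    · exact ih u (kcb_lt hkcb) hkcb.2.2.1 hcase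
    · have := h.zone_count u hkcb.2.2.1 0 (by omega) (hcase2 (by omega)) hcase
      rw [this]
      omega

end ZoneCount
section MoreCount
open KPartition

variable {k ℓ : ℕ} {sh mu : KPartition} {a : ℕ → ℕ × ℕ}

lemma cset_Ioi_self (k : ℕ) (sh : KPartition) (y : ℕ) :
    ({s : ℕ | InChain k sh y s} ∩ Set.Ioi y) = ∅ := by
  ext x
  simp only [Set.mem_inter_iff, Set.mem_setOf_eq, Set.mem_Ioi, Set.mem_empty_iff_false,
    iff_false, not_and]
  intro hx
  have := inChain_le hx
  omega

lemma cset_Ici_self (k : ℕ) (sh : KPartition) (y : ℕ) :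
    ({s : ℕ | InChain k sh y s} ∩ Set.Ici y) = {y} := by
  ext x
  simp only [Set.mem_inter_iff, Set.mem_setOf_eq, Set.mem_Ici, Set.mem_singleton_iff]
  constructor
  · rintro ⟨h1, h2⟩
    have := inChain_le h1
    omega
  · rintro rfl
    exact ⟨InChain.refl, le_rfl⟩

lemma cset_Ici_empty (k : ℕ) (sh : KPartition) {y x : ℕ} (h : y < x) :
    ({s : ℕ | InChain k sh y s} ∩ Set.Ici x) = ∅ := by
  ext z
  simp only [Set.mem_inter_iff, Set.mem_setOf_eq, Set.mem_Ici, Set.mem_empty_iff_false,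
    iff_false, not_and]
  intro hz
  have := inChain_le hz
  omega

lemma SD.cnt_succ (h : SD k ℓ sh mu a) {x j : ℕ} (hj : j + 1 < ℓ) (hx : x ≤ (a j).1) :
    ({s : ℕ | InChain k sh (a j).1 s} ∩ Set.Ici x).ncard =
      ({s : ℕ | InChain k sh (a (j + 1)).1 s} ∩ Set.Ici x).ncard + 1 :=
  ncard_decomp_mem (h.kcb_step hj) hx

lemma SD.cnt_until (h : SD k ℓ sh mu a) {x t : ℕ} (ht : t < ℓ) (hx : x ≤ (a t).1) :
    ∀ n j : ℕ, j + n = t →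
      ({s : ℕ | InChain k sh (a j).1 s} ∩ Set.Ici x).ncard =
        n + ({s : ℕ | InChain k sh (a t).1 s} ∩ Set.Ici x).ncard := by
  intro n
  induction n with
  | zero =>
    intro j hj
    have : j = t := by omega
    rw [this]
    omega
  | succ n ih =>
    intro j hj
    have h1 : j + 1 < ℓ := by omega
    have h2 : x ≤ (a j).1 := le_trans hx (h.row_le (by omega) ht)
    rw [h.cnt_succ h1 h2, ih (j + 1) (by omega)]
    omega

lemma SD.cnt_ge (h : SD k ℓ sh mu a) {x : ℕ} (hx : x ≤ (a (ℓ - 1)).1) :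
    ({s : ℕ | InChain k sh (a 0).1 s} ∩ Set.Ici x).ncard =
      (ℓ - 1) + ({s : ℕ | InChain k sh (a (ℓ - 1)).1 s} ∩ Set.Ici x).ncard :=
  h.cnt_until (by have := h.hl; omega) hx (ℓ - 1) 0 (by omega)

lemma SD.zone_of (h : SD k ℓ sh mu a) {x : ℕ} (h1 : (a (ℓ - 1)).1 < x)
    (h2 : x < (a 0).1) :
    ∃ t : ℕ, t + 1 < ℓ ∧ (a (t + 1)).1 < x ∧ x ≤ (a t).1 := by
  classical
  have hex : ∃ j : ℕ, (a j).1 < x := ⟨ℓ - 1, h1⟩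
  set j0 := Nat.find hex with hj0
  have hspec : (a j0).1 < x := Nat.find_spec hex
  have hj00 : j0 ≠ 0 := by
    intro hc
    rw [hc] at hspec
    omega
  have hj0le : j0 ≤ ℓ - 1 := Nat.find_min' hex h1
  have hmin : ¬ (a (j0 - 1)).1 < x := Nat.find_min hex (by omega)
  refine ⟨j0 - 1, by have := h.hl; omega, ?_, by omega⟩
  have : j0 - 1 + 1 = j0 := by omega
  rw [this]
  exact hspec

lemma mem_set_finite (lam : KPartition) : {b : ℕ × ℕ | lam.Mem b}.Finite := by
  obtain ⟨N, hN⟩ := lam.finite'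
  apply Set.Finite.subset ((Set.finite_Iio N).prod (Set.finite_Iio (lam.parts 0)))
  rintro ⟨i, j⟩ hb
  have hb' : j < lam.parts i := hb
  constructor
  · show i < N
    by_contra hc
    push_neg at hc
    rw [hN i hc] at hb'
    omega
  · show j < lam.parts 0
    have := parts_anti lam (Nat.zero_le i)
    omega

lemma ncard_Iio_nat (ℓ : ℕ) : (Set.Iio ℓ).ncard = ℓ := by
  rw [Set.ncard_eq_toFinset_card', Set.toFinset_Iio, Nat.card_Iio]

lemma SD.psize_eq (h : SD k ℓ sh mu a) : psize mu = psize sh + ℓ := by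
  have hsk : skewSet sh mu = a '' Set.Iio ℓ := by
    ext b
    rw [h.hskew b]
    simp only [Set.mem_image, Set.mem_Iio]
  have hunion : {b : ℕ × ℕ | mu.Mem b} = {b : ℕ × ℕ | sh.Mem b} ∪ skewSet sh mu := by
    ext b
    simp only [Set.mem_setOf_eq, Set.mem_union]
    constructor
    · intro hb
      by_cases hs : sh.Mem b
      · exact Or.inl hs
      · exact Or.inr ⟨hb, hs⟩
    · rintro (hb | ⟨hb, _⟩)
      · exact lt_of_lt_of_le hb (h.hle b.1)
      · exact hb
  have hdisj : Disjoint {b : ℕ × ℕ | sh.Mem b} (skewSet sh mu) := by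
    rw [Set.disjoint_left]
    rintro b hb ⟨_, hb2⟩
    exact hb2 hb
  have hinjon : Set.InjOn a (Set.Iio ℓ) := fun i hi j hj he => h.hinj i j hi hj he
  rw [psize, psize, Nat.card_coe_set_eq, Nat.card_coe_set_eq, hunion,
    Set.ncard_union_eq hdisj (mem_set_finite sh)
      (by rw [hsk]; exact (Set.finite_Iio ℓ).image a),
    hsk, Set.ncard_image_of_injOn hinjon, ncard_Iio_nat]

lemma SD.next_addable (h : SD k ℓ sh mu a) : HasAddable mu (rowUp sh mu + 1) := by
  rw [h.rowUp_eq]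
  right
  simp only [Nat.add_sub_cancel]
  have h1 : mu.parts (a 0).1 = sh.parts (a 0).1 + 1 := h.parts_row h.hl
  have h2 : mu.parts ((a 0).1 + 1) = sh.parts ((a 0).1 + 1) := by
    by_contra hc
    have hlt : sh.parts ((a 0).1 + 1) < mu.parts ((a 0).1 + 1) := by
      have := h.hle ((a 0).1 + 1)
      omega
    obtain ⟨t, ht, he⟩ := (h.changed_iff _).1 hlt
    have := h.row_le (Nat.zero_le t) ht
    omega
  have h3 : sh.parts ((a 0).1 + 1) ≤ sh.parts (a 0).1 := parts_anti sh (by omega)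
  omega

end MoreCount

/-- moving n↑ to the position of n↓ raises the charge of the
letter n by |c_n| - 1. -/
theorem charge_shift_down (k N : ℕ) (hk : 2 ≤ k) (T : ℕ → KPartition)
    (hT : StdKShapeTableau k N T) (n : ℕ) (hn : 2 ≤ n) (hnN : n ≤ N) :
    chargeStepVal k (T (n - 1)) (rowUp (T (n - 2)) (T (n - 1)) + 1)
        (rowDown (T (n - 1)) (T n)) -
      chargeStepVal k (T (n - 1)) (rowUp (T (n - 2)) (T (n - 1)) + 1)
        (rowUp (T (n - 1)) (T n)) =
    (psize (T n) : ℤ) - (psize (T (n - 1)) : ℤ) - 1 := by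
  obtain ⟨m, rfl⟩ : ∃ m, n = m + 2 := ⟨n - 2, by omega⟩
  simp only [show m + 2 - 1 = m + 1 from rfl, show m + 2 - 2 = m from rfl]
  obtain ⟨hks1, hks2, ℓ, a, hl, hstr, _, _⟩ := hT.2 (m + 1) (by omega)
  have h : SD k ℓ (T (m + 1)) (T (m + 2)) a :=
    ⟨hk, hl, hstr.1, hstr.2.1, hstr.2.2.1, hstr.2.2.2⟩
  obtain ⟨_, _, ℓ', a', hl', hstr', _, _⟩ := hT.2 m (by omega)
  have h' : SD k ℓ' (T m) (T (m + 1)) a' :=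
    ⟨hk, hl', hstr'.1, hstr'.2.1, hstr'.2.2.1, hstr'.2.2.2⟩
  have hra : HasAddable (T (m + 1)) (rowUp (T m) (T (m + 1)) + 1) := h'.next_addable
  set sh := T (m + 1) with hshdef
  set mu := T (m + 2) with hmudef
  set r := rowUp (T m) sh + 1 with hrdef
  rw [h.rowUp_eq, h.rowDown_eq, h.psize_eq]
  have hrdru : (a (ℓ - 1)).1 ≤ (a 0).1 := h.row_le (Nat.zero_le _) (by omega)
  have hcast : ((psize sh + ℓ : ℕ) : ℤ) - (psize sh : ℤ) - 1 = (ℓ : ℤ) - 1 := by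
    push_cast; ring
  rw [hcast]
  rcases Nat.lt_or_ge r ((a 0).1) with hcase | hcase
  · -- r < ru
    rw [show chargeStepVal k sh r ((a 0).1) = -(iCC k sh ((a 0).1) r false true : ℤ) by
      simp only [chargeStepVal]; rw [if_neg (by omega)]]
    rw [iCC_ft]
    rcases Nat.lt_or_ge r ((a (ℓ - 1)).1) with hc2 | hc2
    · -- r < rd
      rw [show chargeStepVal k sh r ((a (ℓ - 1)).1) =
          -(iCC k sh ((a (ℓ - 1)).1) r false true : ℤ) by
        simp only [chargeStepVal]; rw [if_neg (by omega)]]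
      rw [iCC_ft]
      have hcnt := h.cnt_ge (x := r) (by omega)
      have hBpos : 1 ≤ ({s : ℕ | InChain k sh (a (ℓ - 1)).1 s} ∩ Set.Ici r).ncard :=
        (Set.ncard_pos (cset_inter_finite _ _ _ _)).2
          ⟨(a (ℓ - 1)).1, InChain.refl, by show r ≤ (a (ℓ - 1)).1; omega⟩
      have hmem_ru : (a 0).1 ∈ ({s : ℕ | InChain k sh (a 0).1 s} ∩ Set.Ici r) :=
        ⟨InChain.refl, by show r ≤ (a 0).1; omega⟩
      have hmem_rd : (a (ℓ - 1)).1 ∈ ({s : ℕ | InChain k sh (a (ℓ - 1)).1 s} ∩ Set.Ici r) :=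
        ⟨InChain.refl, by show r ≤ (a (ℓ - 1)).1; omega⟩
      rw [Set.ncard_diff_singleton_of_mem hmem_ru,
        Set.ncard_diff_singleton_of_mem hmem_rd, hcnt]
      push_cast
      omega
    · rcases Nat.eq_or_lt_of_le hc2 with heq | hlt2
      · -- r = rd
        rw [show chargeStepVal k sh r ((a (ℓ - 1)).1) =
            (iCC k sh r ((a (ℓ - 1)).1) true false : ℤ) by
          simp only [chargeStepVal]; rw [if_pos (by omega)]]
        rw [iCC_tf]
        have hcnt := h.cnt_ge (x := r) (by omega)
        have hrd1 : ({s : ℕ | InChain k sh (a (ℓ - 1)).1 s} ∩ Set.Ici r).ncard = 1 := by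
          rw [heq, cset_Ici_self, Set.ncard_singleton]
        rw [hrd1] at hcnt
        have hmem_ru : (a 0).1 ∈ ({s : ℕ | InChain k sh (a 0).1 s} ∩ Set.Ici r) :=
          ⟨InChain.refl, by show r ≤ (a 0).1; omega⟩
        rw [heq, cset_Ioi_self,
          Set.ncard_diff_singleton_of_mem hmem_ru, hcnt]
        simp only [Set.ncard_empty]
        push_cast
        omega
      · -- rd < r < ru
        obtain ⟨t, ht1, ht2, ht3⟩ := h.zone_of hlt2 hcase
        rw [show chargeStepVal k sh r ((a (ℓ - 1)).1) =
            (iCC k sh r ((a (ℓ - 1)).1) true false : ℤ) by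
          simp only [chargeStepVal]; rw [if_pos (by omega)]]
        rw [iCC_tf]
        have hzc := h.zone_count r hra t ht1 ht2 ht3
        have hIoi : ({s : ℕ | InChain k sh r s} ∩ Set.Ioi ((a (ℓ - 1)).1)) =
            ({s : ℕ | InChain k sh r s} ∩ Set.Ioc ((a (ℓ - 1)).1) ((a 0).1)) := by
          ext x
          simp only [Set.mem_inter_iff, Set.mem_setOf_eq, Set.mem_Ioi, Set.mem_Ioc]
          constructor
          · rintro ⟨h1, h2⟩
            have := inChain_le h1
            exact ⟨h1, h2, by omega⟩
          · rintro ⟨h1, h2, _⟩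
            exact ⟨h1, h2⟩
        rw [hIoi, hzc]
        have hct : ({s : ℕ | InChain k sh (a t).1 s} ∩ Set.Ici r).ncard = 1 := by
          rw [h.cnt_succ ht1 ht3, cset_Ici_empty k sh ht2]
          simp
        have hcntu := h.cnt_until (show t < ℓ by omega) ht3 t 0 (by omega)
        rw [hct] at hcntu
        have hmem_ru : (a 0).1 ∈ ({s : ℕ | InChain k sh (a 0).1 s} ∩ Set.Ici r) :=
          ⟨InChain.refl, by show r ≤ (a 0).1; omega⟩
        rw [Set.ncard_diff_singleton_of_mem hmem_ru, hcntu]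
        push_cast
        omega
  · -- ru ≤ r
    rw [show chargeStepVal k sh r ((a (ℓ - 1)).1) =
        (iCC k sh r ((a (ℓ - 1)).1) true false : ℤ) by
      simp only [chargeStepVal]; rw [if_pos (by omega)]]
    rw [show chargeStepVal k sh r ((a 0).1) = (iCC k sh r ((a 0).1) true false : ℤ) by
      simp only [chargeStepVal]; rw [if_pos (by omega)]]
    rw [iCC_tf, iCC_tf]
    have hdisj : Disjoint ({s : ℕ | InChain k sh r s} ∩ Set.Ioi ((a 0).1))
        ({s : ℕ | InChain k sh r s} ∩ Set.Ioc ((a (ℓ - 1)).1) ((a 0).1)) := by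
      rw [Set.disjoint_left]
      rintro x ⟨_, h1⟩ ⟨_, _, h2⟩
      have h1' : (a 0).1 < x := h1
      omega
    have hsplit : ({s : ℕ | InChain k sh r s} ∩ Set.Ioi ((a (ℓ - 1)).1)).ncard =
        ({s : ℕ | InChain k sh r s} ∩ Set.Ioi ((a 0).1)).ncard +
        ({s : ℕ | InChain k sh r s} ∩ Set.Ioc ((a (ℓ - 1)).1) ((a 0).1)).ncard := by
      rw [← Set.ncard_union_eq hdisj (cset_inter_finite _ _ _ _) (cset_inter_finite _ _ _ _)]
      congr 1
      ext x
      simp only [Set.mem_inter_iff, Set.mem_setOf_eq, Set.mem_Ioi, Set.mem_Ioc, Set.mem_union]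
      constructor
      · rintro ⟨h1, h2⟩
        rcases Nat.lt_or_ge ((a 0).1) x with h3 | h3
        · exact Or.inl ⟨h1, h3⟩
        · exact Or.inr ⟨h1, h2, h3⟩
      · rintro (⟨h1, h3⟩ | ⟨h1, h2, _⟩)
        · exact ⟨h1, by omega⟩
        · exact ⟨h1, h2⟩
    rw [hsplit]
    have hinner : ({s : ℕ | InChain k sh r s} ∩
        Set.Ioc ((a (ℓ - 1)).1) ((a 0).1)).ncard = ℓ - 1 := by
      rcases Nat.lt_or_ge 1 ℓ with hl2 | hl1
      · rcases Nat.eq_or_lt_of_le hcase with heq | hlt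
        · rw [← heq]
          exact h.zone_count ((a 0).1) (h.addable (by omega)) 0 (by omega)
            (h.row_lt (by omega) (by omega)) le_rfl
        · exact h.above_count hks1 (by omega) r hra hlt
      · have hrr : (a (ℓ - 1)).1 = (a 0).1 := by
          have : ℓ - 1 = 0 := by omega
          rw [this]
        rw [hrr, Set.Ioc_self, Set.inter_empty, Set.ncard_empty]
        omega
    rw [hinner]
    push_cast
    omega
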